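/- Let G* = K_δ ∨ (K_{n-2δ+1} ∪ (δ-1)K₁) where δ ≥ 2 and n ≥ 8δ - 7 are integers. Then the Wiener index satisfies 2W(G*) = n² + (2δ - 3)n - 3δ² + 3δ, and consequently 2W(G*)/n ≥ n + δ - 3. -/

import Mathlib

/-- The join of two simple graphs: all edges within each part, plus all cross edges. -/
def gJoin {α β : Type*} (G : SimpleGraph α) (H : SimpleGraph β) : SimpleGraph (α ⊕ β) where
  Adj u v := match u, v with
    | Sum.inl a, Sum.inl b => G.Adj a b
    | Sum.inr a, Sum.inr b => H.Adj a b
    | Sum.inl _, Sum.inr _ => True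
    | Sum.inr _, Sum.inl _ => True
  symm := by refine ⟨?_⟩; rintro (a | a) (b | b) h
             · exact G.adj_symm h
             · trivial
             · trivial
             · exact H.adj_symm h
  loopless := by refine ⟨?_⟩; rintro (a | a) h
                 · exact G.loopless.irrefl a h
                 · exact H.loopless.irrefl a h

/-- The disjoint union of two simple graphs. -/
def gSum {α β : Type*} (G : SimpleGraph α) (H : SimpleGraph β) : SimpleGraph (α ⊕ β) where
  Adj u v := match u, v with
    | Sum.inl a, Sum.inl b => G.Adj a b
    | Sum.inr a, Sum.inr b => H.Adj a b
    | _, _ => False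
  symm := by refine ⟨?_⟩; rintro (a | a) (b | b) h
             · exact G.adj_symm h
             · exact h.elim
             · exact h.elim
             · exact H.adj_symm h
  loopless := by refine ⟨?_⟩; rintro (a | a) h
                 · exact G.loopless.irrefl a h
                 · exact H.loopless.irrefl a h

/-- The graph `K_δ ∨ (K_{n-2δ+1} ∪ (δ-1)K₁)`. -/
def Gstar (n δ : ℕ) :
    SimpleGraph (Fin δ ⊕ (Fin (n - 2 * δ + 1) ⊕ Fin (δ - 1))) :=
  gJoin (⊤ : SimpleGraph (Fin δ))
    (gSum (⊤ : SimpleGraph (Fin (n - 2 * δ + 1))) (⊥ : SimpleGraph (Fin (δ - 1))))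

/-- The signless Laplacian matrix `Q(G) = D(G) + A(G)` over ℝ. -/
noncomputable def qMatrix {V : Type*} [Fintype V] (G : SimpleGraph V) : Matrix V V ℝ := by
  classical exact Matrix.diagonal (fun v => (G.degree v : ℝ)) + G.adjMatrix ℝ

/-- The distance matrix of a graph over ℝ. -/
noncomputable def dMatrix {V : Type*} [Fintype V] (G : SimpleGraph V) : Matrix V V ℝ :=
  fun u v => (G.dist u v : ℝ)

/-- The set of eigenvalues of a real matrix. -/
def eigSet {V : Type*} [Fintype V] (M : Matrix V V ℝ) : Set ℝ :=
  {μ | ∃ v : V → ℝ, v ≠ 0 ∧ M.mulVec v = μ • v}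

/-- The number of odd components of a graph. -/
noncomputable def oddComp {V : Type*} (G : SimpleGraph V) : ℕ :=
  Nat.card {C : G.ConnectedComponent // Odd (Nat.card C.supp)}

/-- `F` is an even factor of `G`: a spanning subgraph with all degrees even and nonzero. -/
def IsEvenFactor {V : Type*} [Fintype V] (G F : SimpleGraph V) : Prop := by
  classical exact F ≤ G ∧ ∀ v : V, Even (F.degree v) ∧ 0 < F.degree v

lemma my_dist_two {V : Type*} (G : SimpleGraph V) {u v w : V} (hne : u ≠ v)
    (h1 : ¬ G.Adj u v) (ha : G.Adj u w) (hb : G.Adj w v) : G.dist u v = 2 := by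
  have hle : G.dist u v ≤ 2 := by
    have := SimpleGraph.dist_le (ha.toWalk.append hb.toWalk)
    simpa using this
  have hr : G.Reachable u v := ⟨ha.toWalk.append hb.toWalk⟩
  have h0 : 0 < G.dist u v := hr.pos_dist_of_ne hne
  have hne1 : G.dist u v ≠ 1 := fun h => h1 (SimpleGraph.dist_eq_one_iff_adj.mp h)
  omega

lemma my_sum_ite (k : ℕ) (a : Fin k) (r : ℝ) :
    ∑ a' : Fin k, (if a = a' then (0 : ℝ) else r) = r * (k - 1) := by
  have h : ∀ a' : Fin k, (if a = a' then (0 : ℝ) else r)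
      = r - (if a = a' then r else 0) := by
    intro a'; split <;> ring
  rw [Finset.sum_congr rfl (fun a' _ => h a'), Finset.sum_sub_distrib,
    Finset.sum_const, Finset.sum_ite_eq]
  simp
  have : 1 ≤ k := a.pos
  push_cast
  ring

theorem stmt_8 (n δ : ℕ) (hδ : 2 ≤ δ) (hn : 8 * (δ : ℝ) - 7 ≤ n) :
    (∑ u, ∑ v, ((Gstar n δ).dist u v : ℝ))
      = (n : ℝ) ^ 2 + (2 * δ - 3) * n - 3 * (δ : ℝ) ^ 2 + 3 * δ ∧
    (∑ u, ∑ v, ((Gstar n δ).dist u v : ℝ)) / n ≥ (n : ℝ) + δ - 3 := by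
  have hδR : (2 : ℝ) ≤ δ := by exact_mod_cast hδ
  have hnN : 8 * δ ≤ n + 7 := by exact_mod_cast (by push_cast; linarith : (8 * δ : ℝ) ≤ (n : ℝ) + 7)
  have h2δ : 2 * δ ≤ n := by omega
  set G := Gstar n δ with hG
  have a0 : Fin δ := ⟨0, by omega⟩
  -- adjacency facts
  have adjAA : ∀ a a' : Fin δ, a ≠ a' → G.Adj (Sum.inl a) (Sum.inl a') := by
    intro a a' h; simp [hG, Gstar, gJoin, h]
  have adjAB : ∀ (a : Fin δ) (x : Fin (n - 2 * δ + 1) ⊕ Fin (δ - 1)),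
      G.Adj (Sum.inl a) (Sum.inr x) := by
    intro a x; simp [hG, Gstar, gJoin]
  have adjBB : ∀ x x' : Fin (n - 2 * δ + 1), x ≠ x' →
      G.Adj (Sum.inr (Sum.inl x)) (Sum.inr (Sum.inl x')) := by
    intro x x' h; simp [hG, Gstar, gJoin, gSum, h]
  -- distance facts (as real numbers)
  have dAA : ∀ a a' : Fin δ,
      ((G.dist (Sum.inl a) (Sum.inl a') : ℕ) : ℝ) = if a = a' then 0 else 1 := by
    intro a a'
    by_cases h : a = a'
    · simp [h]
    · simp [h, SimpleGraph.dist_eq_one_iff_adj.mpr (adjAA a a' h)]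
  have dAB : ∀ (a : Fin δ) (x : Fin (n - 2 * δ + 1) ⊕ Fin (δ - 1)),
      ((G.dist (Sum.inl a) (Sum.inr x) : ℕ) : ℝ) = 1 := by
    intro a x; simp [SimpleGraph.dist_eq_one_iff_adj.mpr (adjAB a x)]
  have dBA : ∀ (a : Fin δ) (x : Fin (n - 2 * δ + 1) ⊕ Fin (δ - 1)),
      ((G.dist (Sum.inr x) (Sum.inl a) : ℕ) : ℝ) = 1 := by
    intro a x; rw [SimpleGraph.dist_comm]; exact dAB a x
  have dBB : ∀ x x' : Fin (n - 2 * δ + 1),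
      ((G.dist (Sum.inr (Sum.inl x)) (Sum.inr (Sum.inl x')) : ℕ) : ℝ)
        = if x = x' then 0 else 1 := by
    intro x x'
    by_cases h : x = x'
    · simp [h]
    · simp [h, SimpleGraph.dist_eq_one_iff_adj.mpr (adjBB x x' h)]
  have dBC : ∀ (x : Fin (n - 2 * δ + 1)) (y : Fin (δ - 1)),
      ((G.dist (Sum.inr (Sum.inl x)) (Sum.inr (Sum.inr y)) : ℕ) : ℝ) = 2 := by
    intro x y
    have h := my_dist_two G (u := Sum.inr (Sum.inl x)) (v := Sum.inr (Sum.inr y))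
      (w := Sum.inl a0) (by simp) (by simp [hG, Gstar, gJoin, gSum])
      (by simp [hG, Gstar, gJoin]) (adjAB a0 _)
    simp [h]
  have dCB : ∀ (x : Fin (n - 2 * δ + 1)) (y : Fin (δ - 1)),
      ((G.dist (Sum.inr (Sum.inr y)) (Sum.inr (Sum.inl x)) : ℕ) : ℝ) = 2 := by
    intro x y; rw [SimpleGraph.dist_comm]; exact dBC x y
  have dCC : ∀ y y' : Fin (δ - 1),
      ((G.dist (Sum.inr (Sum.inr y)) (Sum.inr (Sum.inr y')) : ℕ) : ℝ)
        = if y = y' then 0 else 2 := by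
    intro y y'
    by_cases h : y = y'
    · simp [h]
    · have hd := my_dist_two G (u := Sum.inr (Sum.inr y)) (v := Sum.inr (Sum.inr y'))
        (w := Sum.inl a0) (by simp [h]) (by simp [hG, Gstar, gJoin, gSum])
        (by simp [hG, Gstar, gJoin]) (adjAB a0 _)
      simp [h, hd]
  have hB : ((n - 2 * δ + 1 : ℕ) : ℝ) = (n : ℝ) - 2 * δ + 1 := by
    push_cast [Nat.cast_sub h2δ]; ring
  have hC : ((δ - 1 : ℕ) : ℝ) = (δ : ℝ) - 1 := by
    push_cast [Nat.cast_sub (by omega : 1 ≤ δ)]; ring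
  have key : (∑ u, ∑ v, ((G.dist u v : ℕ) : ℝ))
      = (n : ℝ) ^ 2 + (2 * δ - 3) * n - 3 * (δ : ℝ) ^ 2 + 3 * δ := by
    simp only [Fintype.sum_sum_type]
    simp only [dAA, dAB, dBA, dBB, dBC, dCB, dCC, my_sum_ite,
      Finset.sum_const, Finset.card_univ, Fintype.card_fin, nsmul_eq_mul]
    rw [hB, hC]
    ring
  constructor
  · exact key
  · rw [key]
    have hn0 : (0 : ℝ) < n := by linarith
    rw [ge_iff_le, le_div_iff₀ hn0]
    have h1 : (0 : ℝ) ≤ δ * ((n : ℝ) - 3 * δ + 3) :=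
      mul_nonneg (by linarith) (by linarith)
    nlinarith
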